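/- Fix natural numbers r' ≥ 1 and ℓ ≥ 1. Then the ratio of the mixed Moore bound M(2r', d−r', ℓ) to d^ℓ + d^{ℓ−1} tends to 1 as d → ∞; that is, the function d ↦ (Σ_{i=0}^{ℓ} (1 1) · [[2r'−1, 2r'],[d−r', d−r']]^i · (0 1)ᵀ) / (d^ℓ + d^{ℓ−1}), viewed as a real-valued function of the natural number d > r', tends to 1 as d → ∞. -/

import Mathlib

open Filter Finset


noncomputable def Mm (r' d : ℕ) : Matrix (Fin 2) (Fin 2) ℝ :=
  !![2 * (r' : ℝ) - 1, 2 * (r' : ℝ); (d : ℝ) - (r' : ℝ), (d : ℝ) - (r' : ℝ)]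

lemma hdiv (r' : ℕ) : Tendsto (fun d : ℕ => ((d:ℝ) - r') / d) atTop (nhds 1) := by
  have h : Tendsto (fun d : ℕ => 1 - (r':ℝ)/d) atTop (nhds 1) := by
    simpa using tendsto_const_nhds.sub (tendsto_const_div_atTop_nhds_zero_nat (r':ℝ))
  refine h.congr' ?_
  filter_upwards [eventually_ge_atTop 1] with d hd
  have hd0 : (d:ℝ) ≠ 0 := by
    have : (1:ℝ) ≤ d := by exact_mod_cast hd
    linarith
  field_simp

lemma oneovd : Tendsto (fun d : ℕ => 1 / (d:ℝ)) atTop (nhds 0) := by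
  simpa using tendsto_const_div_atTop_nhds_zero_nat (1:ℝ)

lemma key (r' : ℕ) (j : ℕ) : ∃ α β : ℝ,
    Tendsto (fun d : ℕ => (Mm r' d ^ (j+1)) 0 0 / (d:ℝ)^j) atTop (nhds α) ∧
    Tendsto (fun d : ℕ => (Mm r' d ^ (j+1)) 0 1 / (d:ℝ)^j) atTop (nhds β) ∧
    Tendsto (fun d : ℕ => (Mm r' d ^ (j+1)) 1 0 / (d:ℝ)^(j+1)) atTop (nhds 1) ∧
    Tendsto (fun d : ℕ => (Mm r' d ^ (j+1)) 1 1 / (d:ℝ)^(j+1)) atTop (nhds 1) := by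
  induction j with
  | zero =>
    refine ⟨2*(r':ℝ)-1, 2*(r':ℝ), ?_, ?_, ?_, ?_⟩
    · simp [Mm]
    · simp [Mm]
    · simpa [Mm] using hdiv r'
    · simpa [Mm] using hdiv r'
  | succ j ih =>
    obtain ⟨α, β, h00, h01, h10, h11⟩ := ih
    have hz := hdiv r'
    have entry : ∀ d : ℕ, ∀ i : Fin 2,
        (Mm r' d ^ (j+2)) i 0 = (Mm r' d ^ (j+1)) i 0 * (2*(r':ℝ)-1)
            + (Mm r' d ^ (j+1)) i 1 * ((d:ℝ) - r') ∧
        (Mm r' d ^ (j+2)) i 1 = (Mm r' d ^ (j+1)) i 0 * (2*(r':ℝ))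
            + (Mm r' d ^ (j+1)) i 1 * ((d:ℝ) - r') := by
      intro d i
      constructor <;> · rw [pow_succ]; simp [Mm, Matrix.mul_apply, Fin.sum_univ_two]
    have split : ∀ (f g : ℕ → ℝ) (c : ℝ) (k : ℕ) (L L' : ℝ),
        Tendsto (fun d => f d / (d:ℝ)^k) atTop (nhds L) →
        Tendsto (fun d => g d / (d:ℝ)^k) atTop (nhds L') →
        Tendsto (fun d => (f d * c + g d * ((d:ℝ) - r')) / (d:ℝ)^(k+1)) atTop
          (nhds (L * 0 + L' * 1)) := by
      intro f g c k L L' hf hg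
      have := ((hf.mul (tendsto_const_div_atTop_nhds_zero_nat c)).add (hg.mul hz))
      refine this.congr' ?_
      filter_upwards [eventually_ge_atTop 1] with d hd
      rw [div_mul_div_comm, div_mul_div_comm, ← add_div, ← pow_succ]
    refine ⟨β, β, ?_, ?_, ?_, ?_⟩
    · simpa [(entry _ 0).1] using split _ _ _ _ _ _ h00 h01
    · simpa using split (fun d => (Mm r' d ^ (j+1)) 0 0) (fun d => (Mm r' d ^ (j+1)) 0 1)
        (2*(r':ℝ)) j α β h00 h01 |>.congr' (by
          filter_upwards with d; rw [(entry d 0).2])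
    · simpa using split (fun d => (Mm r' d ^ (j+1)) 1 0) (fun d => (Mm r' d ^ (j+1)) 1 1)
        (2*(r':ℝ)-1) (j+1) 1 1 h10 h11 |>.congr' (by
          filter_upwards with d; rw [(entry d 1).1])
    · simpa using split (fun d => (Mm r' d ^ (j+1)) 1 0) (fun d => (Mm r' d ^ (j+1)) 1 1)
        (2*(r':ℝ)) (j+1) 1 1 h10 h11 |>.congr' (by
          filter_upwards with d; rw [(entry d 1).2])

lemma Nlim (r' i : ℕ) :
    Tendsto (fun d : ℕ => ((Mm r' d ^ i) 0 1 + (Mm r' d ^ i) 1 1) / (d:ℝ)^i)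
      atTop (nhds 1) := by
  cases i with
  | zero => simpa using tendsto_const_nhds (α := ℝ) (f := atTop (α := ℕ)) (a := 1)
  | succ j =>
    obtain ⟨α, β, _, h01, _, h11⟩ := key r' j
    have h01' : Tendsto (fun d : ℕ => (Mm r' d ^ (j+1)) 0 1 / (d:ℝ)^(j+1)) atTop (nhds 0) := by
      have := h01.mul oneovd
      rw [mul_zero β] at this
      refine this.congr' ?_
      filter_upwards with d
      rw [div_mul_div_comm, mul_one, ← pow_succ]
    simpa [add_div] using h01'.add h11


/-- For fixed naturals `r' ≥ 1` and `ℓ ≥ 1`, the ratio of the mixed Moore bound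
`M(2r', d - r', ℓ)` (computed via `∑_{i=0}^ℓ (1 1) · M^i · (0 1)ᵀ` with
`M = [[2r'-1, 2r'],[d-r', d-r']]`) to `d^ℓ + d^{ℓ-1}`, the order of the mixed graph
`S^ℓ_m(K*_{d+1})`, tends to `1` as `d → ∞`. -/
theorem moore_ratio_tendsto_one (r' ℓ : ℕ) (hr' : 1 ≤ r') (hℓ : 1 ≤ ℓ) :
    Tendsto
      (fun d : ℕ =>
        (∑ i ∈ Finset.range (ℓ + 1),
            ((!![2 * (r' : ℝ) - 1, 2 * (r' : ℝ); (d : ℝ) - (r' : ℝ), (d : ℝ) - (r' : ℝ)] ^ i) 0 1 +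
             (!![2 * (r' : ℝ) - 1, 2 * (r' : ℝ); (d : ℝ) - (r' : ℝ), (d : ℝ) - (r' : ℝ)] ^ i) 1 1)) /
          ((d : ℝ) ^ ℓ + (d : ℝ) ^ (ℓ - 1)))
      atTop (nhds 1) := by
  show Tendsto (fun d : ℕ =>
        (∑ i ∈ Finset.range (ℓ + 1), ((Mm r' d ^ i) 0 1 + (Mm r' d ^ i) 1 1)) /
          ((d : ℝ) ^ ℓ + (d : ℝ) ^ (ℓ - 1))) atTop (nhds 1)
  set N : ℕ → ℕ → ℝ := fun i d => (Mm r' d ^ i) 0 1 + (Mm r' d ^ i) 1 1 with hN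
  -- numerator over d^ℓ tends to 1
  have hnum : Tendsto (fun d : ℕ =>
      (∑ i ∈ Finset.range (ℓ + 1), N i d) / (d:ℝ)^ℓ) atTop (nhds 1) := by
    have hsum : Tendsto (fun d : ℕ => ∑ i ∈ Finset.range (ℓ + 1), N i d / (d:ℝ)^ℓ)
        atTop (nhds (∑ i ∈ Finset.range (ℓ + 1), if i = ℓ then (1:ℝ) else 0)) := by
      refine tendsto_finset_sum _ ?_
      intro i hi
      rcases eq_or_ne i ℓ with rfl | hne
      · simpa using Nlim r' i
      · have hilt : i < ℓ := by
          have := Finset.mem_range.mp hi; omega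
        have h0 : Tendsto (fun d : ℕ => 1 / (d:ℝ)^(ℓ - i)) atTop (nhds 0) := by
          have : Tendsto (fun d : ℕ => ((d:ℝ))^(ℓ-i)) atTop atTop :=
            (tendsto_pow_atTop (by omega)).comp tendsto_natCast_atTop_atTop
          simpa [one_div, Pi.inv_def] using this.inv_tendsto_atTop
        have := (Nlim r' i).mul h0
        rw [mul_zero (1:ℝ)] at this
        simp only [hne, if_false]
        refine this.congr' ?_
        filter_upwards with d
        rw [div_mul_div_comm, mul_one, ← pow_add, Nat.add_sub_cancel' hilt.le]
      
    have : (∑ i ∈ Finset.range (ℓ + 1), if i = ℓ then (1:ℝ) else 0) = 1 := by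
      rw [Finset.sum_ite_eq' (Finset.range (ℓ+1)) ℓ (fun _ => (1:ℝ))]
      simp
    rw [this] at hsum
    refine hsum.congr ?_
    intro d
    rw [Finset.sum_div]
  -- denominator factor
  have hden : Tendsto (fun d : ℕ => (d:ℝ)^ℓ / ((d:ℝ)^ℓ + (d:ℝ)^(ℓ-1))) atTop (nhds 1) := by
    have h : Tendsto (fun d : ℕ => 1 - 1/((d:ℝ)+1)) atTop (nhds 1) := by
      simpa using (tendsto_const_nhds (x := (1:ℝ))).sub (tendsto_one_div_add_atTop_nhds_zero_nat)
    refine h.congr' ?_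
    filter_upwards [eventually_ge_atTop 1] with d hd
    have hd1 : (1:ℝ) ≤ d := by exact_mod_cast hd
    have hd0 : (d:ℝ) ≠ 0 := by linarith
    have hpow : (d:ℝ)^ℓ = (d:ℝ)^(ℓ-1) * d := by
      rw [← pow_succ]; congr 1; omega
    have hp0 : (d:ℝ)^(ℓ-1) ≠ 0 := pow_ne_zero _ hd0
    rw [hpow]
    rw [show (d:ℝ)^(ℓ-1) * d + (d:ℝ)^(ℓ-1) = (d:ℝ)^(ℓ-1) * (d + 1) by ring,
      mul_div_mul_left _ _ hp0]
    field_simp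
    ring
  have := hnum.mul hden
  rw [mul_one (1:ℝ)] at this
  refine this.congr' ?_
  filter_upwards [eventually_ge_atTop 1] with d hd
  have hd1 : (1:ℝ) ≤ d := by exact_mod_cast hd
  have hd0 : (d:ℝ)^ℓ ≠ 0 := pow_ne_zero _ (by linarith)
  rw [div_mul_div_comm, mul_comm ((d:ℝ)^ℓ), mul_div_mul_right _ _ hd0]
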